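/- arXiv:2112.10906 — 3 statements merged into one kernel-verified Lean document; each statement's English description precedes it below -/
import Mathlib

section
/- Assume d₁ ∘ d₀ = 0 and that d₀ maps the orthogonal complement of V₀ into the orthogonal complement of V₁. Then L† ∘ dᵗ = 0 as a linear map V₀ → 𝔹 (in the paper's notation, ð_q^{t,p} ∘ d_{q−1}^t = 0); in particular the range of dᵗ is contained in the kernel of L†. -/
noncomputable section

open LinearMap RealInnerProductSpace

variable {W₀ W₁ W₂ : Type*}
  [NormedAddCommGroup W₀] [InnerProductSpace ℝ W₀] [FiniteDimensional ℝ W₀]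
  [NormedAddCommGroup W₁] [InnerProductSpace ℝ W₁] [FiniteDimensional ℝ W₁]
  [NormedAddCommGroup W₂] [InnerProductSpace ℝ W₂] [FiniteDimensional ℝ W₂]

/-- The compressed map `dᵗ : V₀ → V₁`, namely `π ∘ d₀` restricted to `V₀`, where
`π` is the orthogonal projection of `W₁` onto `V₁`. -/
def compressedMap (d₀ : W₀ →ₗ[ℝ] W₁) (V₀ : Submodule ℝ W₀) (V₁ : Submodule ℝ W₁) :
    V₀ →ₗ[ℝ] V₁ :=
  (V₁.orthogonalProjection).toLinearMap ∘ₗ d₀ ∘ₗ V₀.subtype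

/-- The subspace `𝔹 = {e ∈ W₂ : d₁†(e) ∈ V₁}` of `W₂`. -/
def sheafB (d₁ : W₁ →ₗ[ℝ] W₂) (V₁ : Submodule ℝ W₁) : Submodule ℝ W₂ :=
  V₁.comap (LinearMap.adjoint d₁)

/-- The map `L : 𝔹 → V₁` obtained by restricting `d₁†` to `𝔹`. -/
def sheafL (d₁ : W₁ →ₗ[ℝ] W₂) (V₁ : Submodule ℝ W₁) : sheafB d₁ V₁ →ₗ[ℝ] V₁ :=
  (LinearMap.adjoint d₁).restrict (fun _ hx => hx)

/-- The persistent sheaf Laplacian `Δ = L ∘ L† + dt ∘ dt† : V₁ → V₁`, built from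
`d₁` (via `L`, the restriction of `d₁†` to `𝔹`) and a compressed map `dt`. -/
def PSL {V₀ : Submodule ℝ W₀} (d₁ : W₁ →ₗ[ℝ] W₂) (V₁ : Submodule ℝ W₁)
    (dt : V₀ →ₗ[ℝ] V₁) : V₁ →ₗ[ℝ] V₁ :=
  sheafL d₁ V₁ ∘ₗ LinearMap.adjoint (sheafL d₁ V₁) + dt ∘ₗ LinearMap.adjoint dt


/-- `L† ∘ dᵗ = 0` as a linear map `V₀ → 𝔹`; in particular
`range dᵗ ⊆ ker L†`. -/
theorem adjoint_L_comp_compressed_eq_zero (d₀ : W₀ →ₗ[ℝ] W₁) (d₁ : W₁ →ₗ[ℝ] W₂)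
    (V₀ : Submodule ℝ W₀) (V₁ : Submodule ℝ W₁)
    (hd : d₁ ∘ₗ d₀ = 0)
    (hcompl : ∀ x ∈ V₀ᗮ, d₀ x ∈ V₁ᗮ) :
    LinearMap.adjoint (sheafL d₁ V₁) ∘ₗ compressedMap d₀ V₀ V₁ = 0 ∧
      LinearMap.range (compressedMap d₀ V₀ V₁) ≤
        LinearMap.ker (LinearMap.adjoint (sheafL d₁ V₁)) := by
  have key : LinearMap.adjoint (sheafL d₁ V₁) ∘ₗ compressedMap d₀ V₀ V₁ = 0 := by
    ext x
    have h0 : ⟪(LinearMap.adjoint (sheafL d₁ V₁)) (compressedMap d₀ V₀ V₁ x),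
        (LinearMap.adjoint (sheafL d₁ V₁)) (compressedMap d₀ V₀ V₁ x)⟫ = 0 := by
      rw [LinearMap.adjoint_inner_left]
      set y := (LinearMap.adjoint (sheafL d₁ V₁)) (compressedMap d₀ V₀ V₁ x) with hy
      have hmem : (LinearMap.adjoint d₁) (y : W₂) ∈ V₁ := y.2
      have hLy : (sheafL d₁ V₁ y : W₁) = LinearMap.adjoint d₁ (y : W₂) := rfl
      have h1 : ⟪compressedMap d₀ V₀ V₁ x, sheafL d₁ V₁ y⟫
          = ⟪d₀ (x : W₀), LinearMap.adjoint d₁ (y : W₂)⟫ := by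
        rw [Submodule.coe_inner, hLy]
        have h2 := Submodule.starProjection_inner_eq_zero (d₀ (x : W₀)) _ hmem
        rw [inner_sub_left, sub_eq_zero] at h2
        simpa [compressedMap] using h2.symm
      rw [h1, LinearMap.adjoint_inner_right, ← LinearMap.comp_apply, hd]
      simp
    simpa using inner_self_eq_zero.mp h0
  refine ⟨key, fun z hz => ?_⟩
  obtain ⟨x, rfl⟩ := hz
  have := congrArg (fun f => f x) key
  simpa using this
end
end

section
/- Let J : W₁ → W₁ be a self-adjoint linear involution (J† = J and J ∘ J = id) with J(V₁) ⊆ V₁, and let J₁ : V₁ → V₁ be its restriction to V₁. Set d̄₁ := d₁ ∘ J, 𝔹̄ := {e ∈ W₂ : d̄₁†(e) ∈ V₁}, and let Δ̄ be the persistent sheaf Laplacian built from d̄₁ and d̄ᵗ := J₁ ∘ dᵗ. Then 𝔹̄ = 𝔹, Δ̄ = J₁ ∘ Δ ∘ J₁, and consequently a real number μ is an eigenvalue of Δ̄ if and only if it is an eigenvalue of Δ. (Case II of the paper's proposition that the spectra of persistent sheaf Laplacians do not depend on the orientation: alternating the orientation of a q-cell of X_{t+p}.) -/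
noncomputable section

open LinearMap RealInnerProductSpace

variable {W₀ W₁ W₂ : Type*}
  [NormedAddCommGroup W₀] [InnerProductSpace ℝ W₀] [FiniteDimensional ℝ W₀]
  [NormedAddCommGroup W₁] [InnerProductSpace ℝ W₁] [FiniteDimensional ℝ W₁]
  [NormedAddCommGroup W₂] [InnerProductSpace ℝ W₂] [FiniteDimensional ℝ W₂]

lemma adjoint_sheafL (d₁ : W₁ →ₗ[ℝ] W₂) (V₁ : Submodule ℝ W₁) :
    LinearMap.adjoint (sheafL d₁ V₁) =
      (Submodule.orthogonalProjection (sheafB d₁ V₁)).toLinearMap ∘ₗ d₁ ∘ₗ V₁.subtype := by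
  symm
  rw [LinearMap.eq_adjoint_iff]
  intro x e
  simp only [LinearMap.coe_comp, Function.comp_apply, ContinuousLinearMap.coe_coe,
    Submodule.coe_subtype, Submodule.inner_orthogonalProjection_eq_of_mem_right]
  rw [Submodule.coe_inner]
  have : ((sheafL d₁ V₁ e : V₁) : W₁) = LinearMap.adjoint d₁ (e : W₂) := rfl
  rw [this, ← LinearMap.adjoint_inner_left, LinearMap.adjoint_adjoint]

lemma sheafLL (d₁ : W₁ →ₗ[ℝ] W₂) (V₁ : Submodule ℝ W₁) (x : V₁) :
    ((sheafL d₁ V₁ ∘ₗ LinearMap.adjoint (sheafL d₁ V₁)) x : W₁) =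
      LinearMap.adjoint d₁ (Submodule.orthogonalProjection (sheafB d₁ V₁) (d₁ x)) := by
  rw [adjoint_sheafL]; rfl

lemma orthProj_congr {S T : Submodule ℝ W₂} (h : S = T) (w : W₂) :
    ((Submodule.orthogonalProjection S w : S) : W₂) = ((Submodule.orthogonalProjection T w : T) : W₂) := by
  subst h; rfl

/-- Case II of orientation independence: if `J : W₁ → W₁` is a
self-adjoint involution with `J(V₁) ⊆ V₁` and restriction `J₁ : V₁ → V₁`, then
`𝔹̄ = 𝔹`, the Laplacian `Δ̄` built from `d̄₁ = d₁ ∘ J` and `d̄ᵗ = J₁ ∘ dᵗ` equals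
`J₁ ∘ Δ ∘ J₁`, and `Δ̄` and `Δ` have the same eigenvalues. -/
theorem PSL_conj_involution (d₀ : W₀ →ₗ[ℝ] W₁) (d₁ : W₁ →ₗ[ℝ] W₂)
    (V₀ : Submodule ℝ W₀) (V₁ : Submodule ℝ W₁)
    (J : W₁ →ₗ[ℝ] W₁)
    (hJa : LinearMap.adjoint J = J)
    (hJi : J ∘ₗ J = LinearMap.id)
    (hJV : ∀ x ∈ V₁, J x ∈ V₁)
    (J₁ : V₁ →ₗ[ℝ] V₁)
    (hJ₁ : ∀ x : V₁, (J₁ x : W₁) = J x) :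
    sheafB (d₁ ∘ₗ J) V₁ = sheafB d₁ V₁ ∧
      PSL (d₁ ∘ₗ J) V₁ (J₁ ∘ₗ compressedMap d₀ V₀ V₁) =
        J₁ ∘ₗ PSL d₁ V₁ (compressedMap d₀ V₀ V₁) ∘ₗ J₁ ∧
      ∀ μ : ℝ,
        Module.End.HasEigenvalue
            (PSL (d₁ ∘ₗ J) V₁ (J₁ ∘ₗ compressedMap d₀ V₀ V₁) : Module.End ℝ V₁) μ ↔
          Module.End.HasEigenvalue
            (PSL d₁ V₁ (compressedMap d₀ V₀ V₁) : Module.End ℝ V₁) μ := by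
  have hJJ : ∀ w : W₁, J (J w) = w := fun w => congrArg (· w) hJi
  have hB : sheafB (d₁ ∘ₗ J) V₁ = sheafB d₁ V₁ := by
    ext e
    simp only [sheafB, Submodule.mem_comap, LinearMap.adjoint_comp, hJa,
      LinearMap.coe_comp, Function.comp_apply]
    constructor
    · intro h
      have := hJV _ h
      rwa [hJJ] at this
    · intro h
      exact hJV _ h
  have hJ₁J₁ : ∀ x : V₁, J₁ (J₁ x) = x := by
    intro x
    apply Subtype.ext
    rw [hJ₁, hJ₁, hJJ]
  have hJ₁i : J₁ ∘ₗ J₁ = LinearMap.id := LinearMap.ext hJ₁J₁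
  have hJ₁a : LinearMap.adjoint J₁ = J₁ := by
    symm
    rw [LinearMap.eq_adjoint_iff]
    intro x y
    rw [Submodule.coe_inner, Submodule.coe_inner, hJ₁, hJ₁,
      ← LinearMap.adjoint_inner_left, hJa]
  set dt := compressedMap d₀ V₀ V₁ with hdt
  have h1 : sheafL (d₁ ∘ₗ J) V₁ ∘ₗ LinearMap.adjoint (sheafL (d₁ ∘ₗ J) V₁) =
      J₁ ∘ₗ (sheafL d₁ V₁ ∘ₗ LinearMap.adjoint (sheafL d₁ V₁)) ∘ₗ J₁ := by
    ext x
    have l1 := sheafLL (d₁ ∘ₗ J) V₁ x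
    have l2 := sheafLL d₁ V₁ (J₁ x)
    simp only [LinearMap.comp_apply] at l1 l2 ⊢
    rw [l1, hJ₁, l2, hJ₁ x, LinearMap.adjoint_comp, hJa]
    simp only [LinearMap.comp_apply]
    rw [orthProj_congr hB]
  have h2 : (J₁ ∘ₗ dt) ∘ₗ LinearMap.adjoint (J₁ ∘ₗ dt) =
      J₁ ∘ₗ (dt ∘ₗ LinearMap.adjoint dt) ∘ₗ J₁ := by
    rw [LinearMap.adjoint_comp, hJ₁a]
    simp only [LinearMap.comp_assoc]
  have hmain : PSL (d₁ ∘ₗ J) V₁ (J₁ ∘ₗ dt) = J₁ ∘ₗ PSL d₁ V₁ dt ∘ₗ J₁ := by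
    rw [PSL, PSL, h1, h2, LinearMap.add_comp, LinearMap.comp_add]
  refine ⟨hB, hmain, ?_⟩
  have haux : ∀ (f g : Module.End ℝ V₁), g = J₁ ∘ₗ f ∘ₗ J₁ → ∀ μ : ℝ,
      Module.End.HasEigenvalue g μ → Module.End.HasEigenvalue f μ := by
    intro f g hg μ hE
    obtain ⟨x, hx⟩ := hE.exists_hasEigenvector
    have hgx : g x = μ • x := hx.apply_eq_smul
    rw [hg] at hgx
    have hfx : f (J₁ x) = μ • (J₁ x) := by
      have := congrArg J₁ hgx
      simp only [LinearMap.comp_apply] at this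
      rw [hJ₁J₁] at this
      rw [this, map_smul]
    have hne : J₁ x ≠ 0 := by
      intro h
      apply hx.2
      rw [← hJ₁J₁ x, h, map_zero]
    exact Module.End.hasEigenvalue_of_hasEigenvector
      ⟨Module.End.mem_eigenspace_iff.mpr hfx, hne⟩
  intro μ
  constructor
  · exact haux _ _ hmain μ
  · refine haux _ _ ?_ μ
    rw [hmain, ← LinearMap.comp_assoc, ← LinearMap.comp_assoc, hJ₁i,
      LinearMap.comp_assoc, LinearMap.comp_assoc, hJ₁i, LinearMap.id_comp,
      LinearMap.comp_id]
end
end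

section
/- Let c be a nonzero real number, set d̄₁ := c·d₁ and d̄ᵗ := c·dᵗ, and let Δ̄ be the persistent sheaf Laplacian built from d̄₁ and d̄ᵗ (with 𝔹̄ := {e ∈ W₂ : d̄₁†(e) ∈ V₁}). Then 𝔹̄ = 𝔹, Δ̄ = c²·Δ, and a real number μ is an eigenvalue of Δ if and only if c²·μ is an eigenvalue of Δ̄. (This is the paper's proposition that if all labels q_i of a labeled point cloud are multiplied by a coefficient c, so that every coboundary map scales by c, then the spectrum of every persistent sheaf Laplacian is multiplied by c².) -/
noncomputable section

open LinearMap RealInnerProductSpace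

variable {W₀ W₁ W₂ : Type*}
  [NormedAddCommGroup W₀] [InnerProductSpace ℝ W₀] [FiniteDimensional ℝ W₀]
  [NormedAddCommGroup W₁] [InnerProductSpace ℝ W₁] [FiniteDimensional ℝ W₁]
  [NormedAddCommGroup W₂] [InnerProductSpace ℝ W₂] [FiniteDimensional ℝ W₂]

private lemma adjoint_smul_real {E F : Type*}
    [NormedAddCommGroup E] [InnerProductSpace ℝ E] [FiniteDimensional ℝ E]
    [NormedAddCommGroup F] [InnerProductSpace ℝ F] [FiniteDimensional ℝ F]
    (c : ℝ) (f : E →ₗ[ℝ] F) :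
    LinearMap.adjoint (c • f) = c • LinearMap.adjoint f := by
  ext y
  refine ext_inner_right ℝ fun x => ?_
  simp [adjoint_inner_left, inner_smul_left, inner_smul_right, real_inner_smul_left]

private lemma adjoint_isomEquiv {E F : Type*}
    [NormedAddCommGroup E] [InnerProductSpace ℝ E] [FiniteDimensional ℝ E]
    [NormedAddCommGroup F] [InnerProductSpace ℝ F] [FiniteDimensional ℝ F]
    (e : E ≃ₗᵢ[ℝ] F) :
    LinearMap.adjoint (e.toLinearEquiv : E →ₗ[ℝ] F) =
      (e.symm.toLinearEquiv : F →ₗ[ℝ] E) := by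
  ext y
  refine ext_inner_right ℝ fun x => ?_
  rw [adjoint_inner_left]
  calc ⟪y, (e.toLinearEquiv : E →ₗ[ℝ] F) x⟫
      = ⟪e (e.symm y), e x⟫ := by rw [e.apply_symm_apply]; rfl
    _ = ⟪e.symm y, x⟫ := e.inner_map_map _ _
    _ = ⟪(e.symm.toLinearEquiv : F →ₗ[ℝ] E) y, x⟫ := rfl

private lemma hasEigenvalue_smul_iff {V : Type*} [AddCommGroup V] [Module ℝ V]
    (A : Module.End ℝ V) (a μ : ℝ) (ha : a ≠ 0) :
    Module.End.HasEigenvalue A μ ↔ Module.End.HasEigenvalue (a • A) (a * μ) := by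
  constructor
  · intro h
    obtain ⟨x, hx, hx0⟩ := h.exists_hasEigenvector
    rw [Module.End.mem_eigenspace_iff] at hx
    refine Module.End.hasEigenvalue_of_hasEigenvector
      ⟨Module.End.mem_eigenspace_iff.2 ?_, hx0⟩
    simp [hx, smul_smul]
  · intro h
    obtain ⟨x, hx, hx0⟩ := h.exists_hasEigenvector
    rw [Module.End.mem_eigenspace_iff] at hx
    refine Module.End.hasEigenvalue_of_hasEigenvector
      ⟨Module.End.mem_eigenspace_iff.2 ?_, hx0⟩
    have : a • (A x) = a • (μ • x) := by
      simpa [smul_smul, mul_comm] using hx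
    exact smul_right_injective V ha this

/-- scaling all labels by a nonzero `c` scales the coboundaries by `c`
and hence the persistent sheaf Laplacian, and its spectrum, by `c²`. -/
theorem PSL_smul (d₀ : W₀ →ₗ[ℝ] W₁) (d₁ : W₁ →ₗ[ℝ] W₂)
    (V₀ : Submodule ℝ W₀) (V₁ : Submodule ℝ W₁)
    (c : ℝ) (hc : c ≠ 0) :
    sheafB (c • d₁) V₁ = sheafB d₁ V₁ ∧
      PSL (c • d₁) V₁ (c • compressedMap d₀ V₀ V₁) =
        c ^ 2 • PSL d₁ V₁ (compressedMap d₀ V₀ V₁) ∧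
      ∀ μ : ℝ,
        Module.End.HasEigenvalue
            (PSL d₁ V₁ (compressedMap d₀ V₀ V₁) : Module.End ℝ V₁) μ ↔
          Module.End.HasEigenvalue
            (PSL (c • d₁) V₁ (c • compressedMap d₀ V₀ V₁) : Module.End ℝ V₁)
            (c ^ 2 * μ) := by
  have hc2 : (c : ℝ) ^ 2 ≠ 0 := pow_ne_zero _ hc
  have hB : sheafB (c • d₁) V₁ = sheafB d₁ V₁ := by
    ext x
    simp only [sheafB, Submodule.mem_comap, adjoint_smul_real, LinearMap.smul_apply]
    exact V₁.smul_mem_iff hc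
  set e : (sheafB (c • d₁) V₁ : Submodule ℝ W₂) ≃ₗᵢ[ℝ] sheafB d₁ V₁ :=
    LinearIsometryEquiv.ofEq _ _ hB with he
  have hL : sheafL (c • d₁) V₁ =
      c • (sheafL d₁ V₁ ∘ₗ e.toLinearEquiv.toLinearMap) := by
    ext b
    have : (LinearMap.adjoint (c • d₁)) (b : W₂) = c • (LinearMap.adjoint d₁) (b : W₂) := by
      rw [adjoint_smul_real]; rfl
    simp only [sheafL, LinearMap.smul_apply, LinearMap.comp_apply,
      LinearMap.restrict_apply, Submodule.coe_smul]
    exact this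
  have hPSL : PSL (c • d₁) V₁ (c • compressedMap d₀ V₀ V₁) =
      c ^ 2 • PSL d₁ V₁ (compressedMap d₀ V₀ V₁) := by
    unfold PSL
    rw [hL, adjoint_smul_real, adjoint_smul_real, LinearMap.adjoint_comp,
      adjoint_isomEquiv e]
    have hee : (e.toLinearEquiv.toLinearMap ∘ₗ
        e.symm.toLinearEquiv.toLinearMap) = LinearMap.id := by
      ext x; simp
    rw [smul_add]
    congr 1
    · rw [LinearMap.smul_comp, LinearMap.comp_smul, smul_smul, ← sq]
      ext x
      simp
    · rw [LinearMap.smul_comp, LinearMap.comp_smul, smul_smul, ← sq]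
  refine ⟨hB, hPSL, fun μ => ?_⟩
  rw [hPSL]
  exact hasEigenvalue_smul_iff _ _ μ hc2
end
end
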